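/- Let α > 1 and let k be a positive integer. For each i = 1, …, k let Pᵢ, Qᵢ be probability measures on a measurable space Xᵢ with Pᵢ ≪ Qᵢ. Then the Rényi divergence of order α between the product measures is additive: D_α(P₁ × ⋯ × P_k ‖ Q₁ × ⋯ × Q_k) = Σ_{i=1}^{k} D_α(Pᵢ ‖ Qᵢ). In particular, if Mᵢ is a mechanism satisfying (α, εᵢ)-RDP for each i, the independent composition (M₁, …, M_k) satisfies (α, Σᵢ εᵢ)-RDP. -/

import Mathlib

open MeasureTheory ProbabilityTheory ENNReal

open Classical in
/-- The Rényi divergence of order `α` between two measures: `(α-1)⁻¹ log ∫ (dP/dQ)^α dQ`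
when `P ≪ Q`, and `⊤` otherwise. -/
noncomputable def renyiDiv {X : Type*} [MeasurableSpace X] (α : ℝ) (P Q : Measure X) : EReal :=
  if P ≪ Q then ((α - 1)⁻¹ : ℝ) * ENNReal.log (∫⁻ x, (P.rnDeriv Q x) ^ α ∂Q) else ⊤

section Aux

lemma ereal_coe_sum {ι : Type*} (s : Finset ι) (g : ι → ℝ) :
    ((∑ i ∈ s, g i : ℝ) : EReal) = ∑ i ∈ s, ((g i : ℝ) : EReal) := by
  classical
  induction s using Finset.induction with
  | empty => simp
  | insert _ _ h ih => rename_i a t; rw [Finset.sum_insert h, Finset.sum_insert h, EReal.coe_add, ih]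

lemma ereal_sum_ne_bot {ι : Type*} (s : Finset ι) (f : ι → EReal)
    (hbot : ∀ i ∈ s, f i ≠ ⊥) : ∑ i ∈ s, f i ≠ ⊥ := by
  classical
  induction s using Finset.induction with
  | empty => simp
  | insert _ _ h ih =>
      rename_i a t
      rw [Finset.sum_insert h]
      intro hc
      rcases EReal.add_eq_bot_iff.1 hc with h1 | h1
      · exact hbot a (Finset.mem_insert_self a t) h1
      · exact ih (fun i hi => hbot i (Finset.mem_insert_of_mem hi)) h1

lemma ereal_sum_eq_top {ι : Type*} {s : Finset ι} {f : ι → EReal}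
    (hbot : ∀ i ∈ s, f i ≠ ⊥) {j : ι} (hj : j ∈ s) (htop : f j = ⊤) :
    ∑ i ∈ s, f i = ⊤ := by
  classical
  rw [← Finset.add_sum_erase s f hj, htop]
  exact EReal.top_add_of_ne_bot
    (ereal_sum_ne_bot _ _ fun i hi => hbot i (Finset.mem_of_mem_erase hi))

lemma ereal_coe_mul_sum {ι : Type*} (s : Finset ι) (f : ι → EReal) {c : ℝ} (hc : 0 < c)
    (hbot : ∀ i ∈ s, f i ≠ ⊥) :
    (c : EReal) * ∑ i ∈ s, f i = ∑ i ∈ s, (c : EReal) * f i := by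
  classical
  by_cases htop : ∃ j ∈ s, f j = ⊤
  · obtain ⟨j, hj, hjt⟩ := htop
    rw [ereal_sum_eq_top hbot hj hjt, EReal.coe_mul_top_of_pos hc]
    symm
    refine ereal_sum_eq_top (f := fun i => (c : EReal) * f i) ?_ hj ?_
    · intro i hi
      show (c : EReal) * f i ≠ ⊥
      rcases eq_or_ne (f i) ⊤ with h | h
      · simp [h, EReal.coe_mul_top_of_pos hc]
      · rw [← EReal.coe_toReal h (hbot i hi), ← EReal.coe_mul]
        exact EReal.coe_ne_bot _
    · simp [hjt, EReal.coe_mul_top_of_pos hc]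
  · push_neg at htop
    have hrepr : ∀ i ∈ s, f i = ((f i).toReal : EReal) := fun i hi =>
      (EReal.coe_toReal (htop i hi) (hbot i hi)).symm
    rw [Finset.sum_congr rfl hrepr, ← ereal_coe_sum, ← EReal.coe_mul,
      Finset.mul_sum, ereal_coe_sum]
    refine Finset.sum_congr rfl fun i hi => ?_
    rw [EReal.coe_mul, ← hrepr i hi]

lemma ennreal_log_prod {ι : Type*} (s : Finset ι) (f : ι → ℝ≥0∞) :
    ENNReal.log (∏ i ∈ s, f i) = ∑ i ∈ s, ENNReal.log (f i) := by
  classical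
  induction s using Finset.induction with
  | empty => simp
  | insert _ _ h ih =>
      rename_i a t
      rw [Finset.prod_insert h, Finset.sum_insert h, ENNReal.log_mul_add, ih]

lemma lintegral_pi_prod {n : ℕ} {E : Fin n → Type*} [∀ i, MeasurableSpace (E i)]
    (μ : ∀ i, Measure (E i)) [∀ i, SigmaFinite (μ i)]
    (f : ∀ i, E i → ℝ≥0∞) (hf : ∀ i, Measurable (f i)) :
    ∫⁻ x, ∏ i, f i (x i) ∂Measure.pi μ = ∏ i, ∫⁻ x, f i x ∂μ i := by
  induction n with
  | zero => simp
  | succ n ih =>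
      have hg : Measurable fun v : (j : Fin n) → E (Fin.succ j) =>
          ∏ j, f (Fin.succ j) (v j) :=
        Finset.measurable_prod Finset.univ
          (fun j _ => (hf (Fin.succ j)).comp (measurable_pi_apply j))
      calc
        ∫⁻ x, ∏ i, f i (x i) ∂Measure.pi μ
            = ∫⁻ y : E 0 × ((j : Fin n) → E (Fin.succ j)),
                f 0 y.1 * ∏ j, f (Fin.succ j) (y.2 j)
                ∂((μ 0).prod (Measure.pi fun j => μ (Fin.succ j))) := by
          rw [← ((measurePreserving_piFinSuccAbove μ 0).symm).lintegral_comp_emb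
            (MeasurableEquiv.measurableEmbedding _)]
          simp_rw [MeasurableEquiv.piFinSuccAbove_symm_apply, Fin.insertNthEquiv,
            Fin.prod_univ_succ, Fin.insertNth_zero, Equiv.coe_fn_mk, Fin.cons_succ,
            Fin.cons_zero]
          rfl
        _ = (∫⁻ x, f 0 x ∂μ 0) * ∏ j : Fin n, ∫⁻ x, f (Fin.succ j) x ∂μ (Fin.succ j) := by
          rw [lintegral_prod_mul (hf 0).aemeasurable hg.aemeasurable, ih _ _ fun j => hf _]
        _ = ∏ i, ∫⁻ x, f i x ∂μ i := by rw [Fin.prod_univ_succ]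

theorem renyiDiv_pi_aux {k : ℕ} {X : Fin k → Type*} [∀ i, MeasurableSpace (X i)]
    (α : ℝ) (hα : 1 < α)
    (P Q : ∀ i, Measure (X i)) [∀ i, IsProbabilityMeasure (P i)]
    [∀ i, IsProbabilityMeasure (Q i)] (hac : ∀ i, P i ≪ Q i) :
    Measure.pi P ≪ Measure.pi Q ∧
    ∫⁻ x, ((Measure.pi P).rnDeriv (Measure.pi Q) x) ^ α ∂Measure.pi Q
      = ∏ i, ∫⁻ x, ((P i).rnDeriv (Q i) x) ^ α ∂Q i := by
  set f : ∀ i, X i → ℝ≥0∞ := fun i => (P i).rnDeriv (Q i) with hfdef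
  have hfm : ∀ i, Measurable (f i) := fun i => Measure.measurable_rnDeriv _ _
  have hgm : Measurable fun x : ∀ i, X i => ∏ i, f i (x i) :=
    Finset.measurable_prod Finset.univ fun i _ => (hfm i).comp (measurable_pi_apply i)
  have hPx : Measure.pi P = (Measure.pi Q).withDensity fun x => ∏ i, f i (x i) := by
    refine Measure.pi_eq (μ := P) fun s hs => ?_
    rw [withDensity_apply _ (MeasurableSet.univ_pi hs),
      ← lintegral_indicator (MeasurableSet.univ_pi hs) _]
    have hpt : ∀ x : ∀ i, X i,
        (Set.pi Set.univ s).indicator (fun x => ∏ i, f i (x i)) x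
          = ∏ i, (s i).indicator (f i) (x i) := by
      intro x
      by_cases hx : x ∈ Set.pi Set.univ s
      · rw [Set.indicator_of_mem hx]
        exact Finset.prod_congr rfl fun i _ =>
          (Set.indicator_of_mem (hx i (Set.mem_univ i)) _).symm
      · rw [Set.indicator_of_notMem hx]
        rw [Set.mem_univ_pi] at hx
        push_neg at hx
        obtain ⟨i, hi⟩ := hx
        exact (Finset.prod_eq_zero (Finset.mem_univ i)
          (Set.indicator_of_notMem hi _)).symm
    rw [lintegral_congr hpt,
      lintegral_pi_prod Q _ (fun i => (hfm i).indicator (hs i))]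
    exact Finset.prod_congr rfl fun i _ => by
      rw [lintegral_indicator (hs i) _, Measure.setLIntegral_rnDeriv' (hac i) (hs i)]
  have hacpi : Measure.pi P ≪ Measure.pi Q := by
    rw [hPx]; exact withDensity_absolutelyContinuous _ _
  refine ⟨hacpi, ?_⟩
  have hrn : (Measure.pi P).rnDeriv (Measure.pi Q)
      =ᵐ[Measure.pi Q] fun x => ∏ i, f i (x i) := by
    rw [hPx]; exact Measure.rnDeriv_withDensity _ hgm
  calc ∫⁻ x, ((Measure.pi P).rnDeriv (Measure.pi Q) x) ^ α ∂Measure.pi Q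
      = ∫⁻ x, (∏ i, f i (x i)) ^ α ∂Measure.pi Q :=
        lintegral_congr_ae (hrn.mono fun x hx => by dsimp only; rw [hx])
    _ = ∫⁻ x, ∏ i, (f i (x i)) ^ α ∂Measure.pi Q := by
        simp_rw [ENNReal.prod_rpow_of_nonneg
          (le_of_lt (lt_trans one_pos hα) : (0:ℝ) ≤ α)]
    _ = ∏ i, ∫⁻ x, (f i x) ^ α ∂Q i :=
        lintegral_pi_prod Q _ (fun i => (hfm i).pow_const α)

theorem renyiDiv_pi_eq {k : ℕ} {X : Fin k → Type*} [∀ i, MeasurableSpace (X i)]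
    (α : ℝ) (hα : 1 < α)
    (P Q : ∀ i, Measure (X i)) [∀ i, IsProbabilityMeasure (P i)]
    [∀ i, IsProbabilityMeasure (Q i)] (hac : ∀ i, P i ≪ Q i) :
    renyiDiv α (Measure.pi P) (Measure.pi Q) = ∑ i, renyiDiv α (P i) (Q i) := by
  obtain ⟨hacpi, hJ⟩ := renyiDiv_pi_aux α hα P Q hac
  have hα0 : (0:ℝ) < (α - 1)⁻¹ := inv_pos.mpr (by linarith)
  have hIpos : ∀ i, (0:ℝ≥0∞) < ∫⁻ x, ((P i).rnDeriv (Q i) x) ^ α ∂Q i := by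
    intro i
    rw [pos_iff_ne_zero]
    intro h0
    rw [lintegral_eq_zero_iff ((Measure.measurable_rnDeriv _ _).pow_const α)] at h0
    have h1 : ∫⁻ x, (P i).rnDeriv (Q i) x ∂Q i = 0 := by
      rw [lintegral_eq_zero_iff (Measure.measurable_rnDeriv _ _)]
      filter_upwards [h0] with x hx
      rcases ENNReal.rpow_eq_zero_iff.1 hx with ⟨h, _⟩ | ⟨_, hlt⟩
      · exact h
      · linarith
    rw [Measure.lintegral_rnDeriv (hac i)] at h1
    simp [measure_univ] at h1
  unfold renyiDiv
  rw [if_pos hacpi, hJ, ennreal_log_prod,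
    ereal_coe_mul_sum _ _ hα0 (fun i _ => by
      rw [Ne, ENNReal.log_eq_bot_iff]; exact (hIpos i).ne')]
  exact Finset.sum_congr rfl fun i _ => by rw [if_pos (hac i)]

end Aux

/-- Additivity of the Rényi divergence of order `α > 1` over products of probability measures:
`D_α(P₁ × ⋯ × P_k ‖ Q₁ × ⋯ × Q_k) = Σᵢ D_α(Pᵢ ‖ Qᵢ)`. In particular, if each mechanism `Mᵢ`
satisfies `(α, εᵢ)`-RDP, the independent composition `(M₁, …, M_k)` satisfies `(α, Σᵢ εᵢ)`-RDP. -/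
theorem renyiDiv_pi_eq_sum {k : ℕ} (hk : 0 < k) {X : Fin k → Type*}
    [∀ i, MeasurableSpace (X i)]
    (α : ℝ) (hα : 1 < α)
    (P Q : ∀ i, Measure (X i)) [∀ i, IsProbabilityMeasure (P i)]
    [∀ i, IsProbabilityMeasure (Q i)]
    (hac : ∀ i, P i ≪ Q i)
    {𝒟 : Type*} (Adj : 𝒟 → 𝒟 → Prop)
    (M : ∀ i, 𝒟 → Measure (X i)) (hM : ∀ i D, IsProbabilityMeasure (M i D))
    (ε : Fin k → ℝ)
    (hRDP : ∀ i D D', Adj D D' → renyiDiv α (M i D) (M i D') ≤ ((ε i : ℝ) : EReal)) :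
    renyiDiv α (Measure.pi P) (Measure.pi Q) = ∑ i, renyiDiv α (P i) (Q i) ∧
      ∀ D D', Adj D D' →
        renyiDiv α (Measure.pi fun i => M i D) (Measure.pi fun i => M i D')
          ≤ ((∑ i, ε i : ℝ) : EReal) := by
  constructor
  · exact renyiDiv_pi_eq α hα P Q hac
  · intro D D' h
    haveI : ∀ i, IsProbabilityMeasure (M i D) := fun i => hM i D
    haveI : ∀ i, IsProbabilityMeasure (M i D') := fun i => hM i D'
    have hacM : ∀ i, M i D ≪ M i D' := by
      intro i
      by_contra hc
      have htop : renyiDiv α (M i D) (M i D') = ⊤ := by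
        unfold renyiDiv; rw [if_neg hc]
      have h2 := hRDP i D D' h
      rw [htop] at h2
      exact absurd h2 (not_le.mpr (EReal.coe_lt_top _))
    rw [renyiDiv_pi_eq α hα _ _ hacM, ereal_coe_sum]
    exact Finset.sum_le_sum fun i _ => hRDP i D D' h
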